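/- If n is a prime number and k is a positive integer, then there exists a bijection between N_{n,k} (the set of rotation-classes of (n,k)-codes, i.e., binary necklaces with n black beads and k white beads) and F_{n,k,0} (the set of (n,k)-codes with weighted sum 0 in ZMod n). -/

import Mathlib

open Finset

/-- An `(n,k)`-code: `f : ZMod n → ℕ` with total sum `k`. -/
def IsCode (n : ℕ) [NeZero n] (k : ℕ) (f : ZMod n → ℕ) : Prop :=
  ∑ i : ZMod n, f i = k

/-- The weighted sum `W(f) = ∑ i · f(i)` in `ZMod n`. -/
def wsum (n : ℕ) [NeZero n] (f : ZMod n → ℕ) : ZMod n :=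
  ∑ i : ZMod n, i * (f i : ZMod n)

/-- The rotation `c`, defined by `(c f) i = f (i+1)`. -/
def rot (n : ℕ) [NeZero n] (f : ZMod n → ℕ) : ZMod n → ℕ := fun i => f (i + 1)

/-- A code is aperiodic (has period `n`) if `c^j f = f` implies `n ∣ j`. -/
def Aperiodic (n : ℕ) [NeZero n] (f : ZMod n → ℕ) : Prop :=
  ∀ j : ℕ, (rot n)^[j] f = f → n ∣ j

/-- The rotation class (orbit under `c`) of a code. -/
def rotOrbit (n : ℕ) [NeZero n] (f : ZMod n → ℕ) : Set (ZMod n → ℕ) :=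
  {g | ∃ j : ℕ, (rot n)^[j] f = g}


/-- The set `N_{n,k}` of binary necklaces with `n` black and `k` white beads,
realized as rotation-classes of `(n,k)`-codes. -/
def necklaces (n k : ℕ) [NeZero n] : Set (Set (ZMod n → ℕ)) :=
  {S | ∃ f : ZMod n → ℕ, IsCode n k f ∧ S = rotOrbit n f}

namespace NeckAux

variable {n k : ℕ} [NeZero n]

/-- Shift of a code by `j`. -/
def shift (n : ℕ) [NeZero n] (j : ZMod n) (f : ZMod n → ℕ) : ZMod n → ℕ := fun i => f (i + j)

lemma shift_zero (f : ZMod n → ℕ) : shift n 0 f = f := by funext i; simp [shift]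

lemma shift_shift (a b : ZMod n) (f : ZMod n → ℕ) :
    shift n a (shift n b f) = shift n (a + b) f := by
  funext i; simp [shift, add_assoc]

lemma rot_iterate (j : ℕ) (f : ZMod n → ℕ) :
    (rot n)^[j] f = shift n (j : ZMod n) f := by
  induction j with
  | zero => simp [shift_zero]
  | succ m ih =>
      rw [Function.iterate_succ_apply', ih]
      funext i
      show shift n (m : ZMod n) f (i + 1) = f (i + ((m : ℕ) + 1 : ℕ))
      simp only [shift]
      push_cast
      ring_nf

lemma mem_rotOrbit_iff (f g : ZMod n → ℕ) :
    g ∈ rotOrbit n f ↔ ∃ j : ZMod n, shift n j f = g := by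
  constructor
  · rintro ⟨j, rfl⟩; exact ⟨(j : ZMod n), (rot_iterate j f).symm⟩
  · rintro ⟨j, rfl⟩
    exact ⟨j.val, by rw [rot_iterate, ZMod.natCast_zmod_val]⟩

lemma rotOrbit_shift (j : ZMod n) (f : ZMod n → ℕ) :
    rotOrbit n (shift n j f) = rotOrbit n f := by
  ext g
  simp only [mem_rotOrbit_iff]
  constructor
  · rintro ⟨a, rfl⟩; exact ⟨a + j, (shift_shift a j f).symm⟩
  · rintro ⟨a, rfl⟩
    refine ⟨a - j, ?_⟩
    rw [shift_shift]; ring_nf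

lemma rotOrbit_eq_iff (f g : ZMod n → ℕ) :
    rotOrbit n f = rotOrbit n g ↔ ∃ j : ZMod n, shift n j g = f := by
  constructor
  · intro h
    have : f ∈ rotOrbit n g := by
      rw [← h, mem_rotOrbit_iff]; exact ⟨0, shift_zero f⟩
    rwa [mem_rotOrbit_iff] at this
  · rintro ⟨j, rfl⟩; exact rotOrbit_shift j g

lemma isCode_shift (j : ZMod n) {f : ZMod n → ℕ} (hf : IsCode n k f) :
    IsCode n k (shift n j f) := by
  unfold IsCode at *
  rw [← hf]
  exact Fintype.sum_equiv (Equiv.addRight j) _ _ (fun i => rfl)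

lemma cast_sum_code {f : ZMod n → ℕ} (hf : IsCode n k f) :
    ∑ i : ZMod n, (f i : ZMod n) = (k : ZMod n) := by
  rw [← Nat.cast_sum, hf]

lemma wsum_shift (j : ZMod n) {f : ZMod n → ℕ} (hf : IsCode n k f) :
    wsum n (shift n j f) = wsum n f - j * k := by
  unfold wsum shift
  have h1 : ∑ i : ZMod n, i * ((f (i + j) : ℕ) : ZMod n)
      = ∑ i : ZMod n, (i - j) * ((f i : ℕ) : ZMod n) := by
    apply Fintype.sum_equiv (Equiv.addRight j)
    intro i
    simp [Equiv.addRight]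
  rw [h1]
  simp only [sub_mul]
  rw [Finset.sum_sub_distrib, ← Finset.mul_sum, cast_sum_code hf]

lemma shift_nsmul {d : ZMod n} {f : ZMod n → ℕ} (hfix : shift n d f = f) :
    ∀ c : ℕ, shift n ((c : ZMod n) * d) f = f := by
  intro c
  induction c with
  | zero => simpa using shift_zero f
  | succ m ih =>
      have : ((m + 1 : ℕ) : ZMod n) * d = (m : ZMod n) * d + d := by push_cast; ring
      rw [this, ← shift_shift, hfix, ih]

lemma shift_all_of_fix (hprime : n.Prime) {d : ZMod n} (hd : d ≠ 0) {f : ZMod n → ℕ}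
    (hfix : shift n d f = f) : ∀ j : ZMod n, shift n j f = f := by
  haveI : Fact n.Prime := ⟨hprime⟩
  intro j
  have h := shift_nsmul hfix (j * d⁻¹).val
  rwa [ZMod.natCast_zmod_val, mul_assoc, inv_mul_cancel₀ hd, mul_one] at h

lemma const_of_fix_one {f : ZMod n → ℕ} (hfix : shift n (1 : ZMod n) f = f) :
    ∀ i, f i = f 0 := by
  have aux : ∀ m : ℕ, f (m : ZMod n) = f 0 := by
    intro m
    induction m with
    | zero => simp
    | succ c ih =>
        have := congrFun hfix (c : ZMod n)
        simp only [shift] at this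
        push_cast
        rw [this, ih]
  intro i
  conv_lhs => rw [← ZMod.natCast_zmod_val i]
  exact aux i.val

lemma sum_const_code {f : ZMod n → ℕ} (hconst : ∀ i, f i = f 0) (hf : IsCode n k f) :
    n * f 0 = k := by
  unfold IsCode at hf
  rw [← hf]
  rw [Finset.sum_congr rfl (fun i _ => hconst i)]
  simp [Finset.card_univ, ZMod.card n, mul_comm]

lemma isCode_const (hdvd : n ∣ k) : IsCode n k (fun _ : ZMod n => k / n) := by
  unfold IsCode
  simp [Finset.card_univ, ZMod.card n]
  exact (Nat.mul_div_cancel' hdvd)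

lemma shift_const (j : ZMod n) : shift n j (fun _ : ZMod n => k / n) = fun _ => k / n := rfl

section CodeT

variable (n k : ℕ) [NeZero n]

/-- The type of `(n,k)`-codes. -/
abbrev CodeT := {f : ZMod n → ℕ // IsCode n k f}

variable {n k}

lemma code_le {f : ZMod n → ℕ} (hf : IsCode n k f) (i : ZMod n) : f i ≤ k := by
  rw [← hf]
  exact Finset.single_le_sum (fun j _ => Nat.zero_le _) (mem_univ i)

instance : Finite (CodeT n k) := by
  apply Finite.of_injective
    (fun x : CodeT n k => (fun i => (⟨x.1 i, Nat.lt_succ_of_le (code_le x.2 i)⟩ : Fin (k+1))))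
  intro x y h
  apply Subtype.ext; funext i
  have := congrFun h i
  simpa [Fin.ext_iff] using this

/-- Shift as a map on codes. -/
def shiftC (j : ZMod n) (x : CodeT n k) : CodeT n k := ⟨shift n j x.1, isCode_shift j x.2⟩

/-- Shift as an equivalence on codes. -/
def shiftCEquiv (j : ZMod n) : CodeT n k ≃ CodeT n k where
  toFun := shiftC j
  invFun := shiftC (-j)
  left_inv := fun x => by
    apply Subtype.ext
    show shift n (-j) (shift n j x.1) = x.1
    rw [shift_shift]; simp [shift_zero]
  right_inv := fun x => by
    apply Subtype.ext
    show shift n j (shift n (-j) x.1) = x.1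
    rw [shift_shift]; simp [shift_zero]

/-- The map sending a code to its necklace. -/
def toNeck (x : CodeT n k) : necklaces n k := ⟨rotOrbit n x.1, ⟨x.1, x.2, rfl⟩⟩

lemma toNeck_surjective : Function.Surjective (toNeck : CodeT n k → necklaces n k) := by
  rintro ⟨S, f, hf, rfl⟩
  exact ⟨⟨f, hf⟩, rfl⟩

instance : Finite (necklaces n k) := Finite.of_surjective _ toNeck_surjective

lemma toNeck_eq_iff (x y : CodeT n k) :
    toNeck x = toNeck y ↔ ∃ j : ZMod n, shiftC j y = x := by
  constructor
  · intro h
    have h2 : rotOrbit n x.1 = rotOrbit n y.1 := congrArg Subtype.val h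
    rw [rotOrbit_eq_iff] at h2
    obtain ⟨j, hj⟩ := h2
    exact ⟨j, Subtype.ext hj⟩
  · rintro ⟨j, rfl⟩
    apply Subtype.ext
    show rotOrbit n (shift n j y.1) = rotOrbit n y.1
    exact rotOrbit_shift j y.1

/-- fibers of `toNeck` are ranges of the shift map -/
def fiberEquivRange (y : CodeT n k) :
    {x : CodeT n k // toNeck x = toNeck y} ≃ Set.range (fun j : ZMod n => shiftC j y) :=
  Equiv.subtypeEquivRight (fun x => by rw [toNeck_eq_iff]; rfl)

lemma card_fiber_of_not_const (hprime : n.Prime) (y : CodeT n k)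
    (hnc : ¬ (∀ i, y.1 i = y.1 0)) :
    Nat.card {x : CodeT n k // toNeck x = toNeck y} = n := by
  rw [Nat.card_congr (fiberEquivRange y)]
  have hinj : Function.Injective (fun j : ZMod n => shiftC j y) := by
    intro j1 j2 h
    by_contra hne
    have h1 : shift n j1 y.1 = shift n j2 y.1 := congrArg Subtype.val h
    have h2 : shift n (j1 - j2) y.1 = y.1 := by
      have e1 : shift n (-j2) (shift n j1 y.1) = shift n (j1 - j2) y.1 := by
        rw [shift_shift]; ring_nf
      have e2 : shift n (-j2) (shift n j2 y.1) = y.1 := by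
        rw [shift_shift]; simp [shift_zero]
      rw [← e1, h1, e2]
    have hd : j1 - j2 ≠ 0 := sub_ne_zero_of_ne hne
    exact hnc (const_of_fix_one (shift_all_of_fix hprime hd h2 1))
  rw [Nat.card_range_of_injective hinj, Nat.card_zmod]

lemma card_fiber_of_const (y : CodeT n k) (hc : ∀ i, y.1 i = y.1 0) :
    Nat.card {x : CodeT n k // toNeck x = toNeck y} = 1 := by
  rw [Nat.card_congr (fiberEquivRange y)]
  have hg : (Set.range fun j : ZMod n => shiftC j y) = {y} := by
    ext z
    simp only [Set.mem_range, Set.mem_singleton_iff]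
    constructor
    · rintro ⟨j, rfl⟩
      apply Subtype.ext
      funext i
      show y.1 (i + j) = y.1 i
      rw [hc (i + j), hc i]
    · rintro rfl
      exact ⟨0, Subtype.ext (shift_zero _)⟩
  rw [hg, Nat.card_coe_set_eq, Set.ncard_singleton]

/-- generic: cardinality as a sum of fiber cardinalities -/
lemma card_eq_sum_fibers {β γ : Type*} [Fintype β] [Finite γ] (q : γ → β) :
    Nat.card γ = ∑ S : β, Nat.card {x : γ // q x = S} := by
  classical
  rw [← Nat.card_congr (Equiv.sigmaFiberEquiv q)]
  letI : Fintype γ := Fintype.ofFinite γ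
  letI : ∀ S, Fintype {x : γ // q x = S} := fun S => Fintype.ofFinite _
  rw [Nat.card_eq_fintype_card, Fintype.card_sigma]
  simp [Nat.card_eq_fintype_card]

/-- the wsum fibers -/
def FW (n k : ℕ) [NeZero n] (t : ZMod n) := {x : CodeT n k // wsum n x.1 = t}

instance (t : ZMod n) : Finite (FW n k t) := by unfold FW; infer_instance

def fwEquiv (j t : ZMod n) : FW n k t ≃ FW n k (t - j * k) :=
  Equiv.subtypeEquiv (shiftCEquiv j) (fun x => by
    show wsum n x.1 = t ↔ wsum n (shift n j x.1) = t - j * k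
    rw [wsum_shift j x.2, sub_left_inj])

end CodeT

end NeckAux

namespace NeckAux

section Counting

variable {n k : ℕ} [NeZero n]

lemma card_code_eq_of_not_dvd (hprime : n.Prime) (hndvd : ¬ n ∣ k) :
    Nat.card (CodeT n k) = n * Nat.card (necklaces n k) := by
  classical
  letI : Fintype (necklaces n k) := Fintype.ofFinite _
  rw [card_eq_sum_fibers (toNeck : CodeT n k → necklaces n k)]
  have h : ∀ S : necklaces n k, Nat.card {x : CodeT n k // toNeck x = S} = n := by
    intro S
    obtain ⟨y, rfl⟩ := toNeck_surjective S
    apply card_fiber_of_not_const hprime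
    intro hc
    exact hndvd ⟨y.1 0, (sum_const_code hc y.2).symm⟩
  rw [Finset.sum_congr rfl (fun S _ => h S)]
  simp [Finset.card_univ, mul_comm, Nat.card_eq_fintype_card]

/-- The constant code, when `n ∣ k`. -/
def constCode (n k : ℕ) [NeZero n] (hdvd : n ∣ k) : CodeT n k :=
  ⟨fun _ => k / n, isCode_const hdvd⟩

lemma card_code_eq_of_dvd (hprime : n.Prime) (hdvd : n ∣ k) :
    Nat.card (CodeT n k) = 1 + n * (Nat.card (necklaces n k) - 1) := by
  classical
  letI : Fintype (necklaces n k) := Fintype.ofFinite _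
  rw [card_eq_sum_fibers (toNeck : CodeT n k → necklaces n k)]
  set c0 := constCode n k hdvd with hc0
  have h : ∀ S : necklaces n k, Nat.card {x : CodeT n k // toNeck x = S}
      = if S = toNeck c0 then 1 else n := by
    intro S
    obtain ⟨y, rfl⟩ := toNeck_surjective S
    by_cases hc : ∀ i, y.1 i = y.1 0
    · have hy : y = c0 := by
        apply Subtype.ext
        funext i
        show y.1 i = k / n
        have h0 : n * y.1 0 = k := sum_const_code hc y.2
        have h1 : k / n = y.1 0 :=
          Nat.div_eq_of_eq_mul_left (Nat.pos_of_ne_zero (NeZero.ne n))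
            (h0.symm.trans (mul_comm n (y.1 0)))
        rw [hc i, ← h1]
      rw [if_pos (by rw [hy]), card_fiber_of_const y hc]
    · rw [if_neg, card_fiber_of_not_const hprime y hc]
      intro heq
      rw [toNeck_eq_iff] at heq
      obtain ⟨j, hj⟩ := heq
      apply hc
      intro i
      have : y.1 = fun _ => k / n := by
        rw [← congrArg Subtype.val hj]; rfl
      rw [this]
  rw [Finset.sum_congr rfl (fun S _ => h S)]
  rw [← Finset.add_sum_erase _ _ (Finset.mem_univ (toNeck c0))]
  rw [if_pos rfl]
  congr 1
  have : ∀ S ∈ Finset.univ.erase (toNeck c0),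
      (if S = toNeck c0 then 1 else n) = n := by
    intro S hS
    rw [if_neg (Finset.ne_of_mem_erase hS)]
  rw [Finset.sum_congr rfl this, Finset.sum_const, Finset.card_erase_of_mem (Finset.mem_univ _),
    Finset.card_univ, smul_eq_mul, mul_comm, Nat.card_eq_fintype_card]

lemma card_fw_eq_of_not_dvd (hprime : n.Prime) (hndvd : ¬ n ∣ k) (t : ZMod n) :
    Nat.card (FW n k t) = Nat.card (FW n k 0) := by
  haveI : Fact n.Prime := ⟨hprime⟩
  have hk : (k : ZMod n) ≠ 0 := by
    rw [Ne, ZMod.natCast_eq_zero_iff]; exact hndvd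
  have h := Nat.card_congr (fwEquiv (t * (k : ZMod n)⁻¹) t (k := k))
  have ht : t - t * (k : ZMod n)⁻¹ * k = 0 := by
    rw [mul_assoc, inv_mul_cancel₀ hk, mul_one, sub_self]
  rwa [ht] at h

lemma card_code_eq_sum_fw :
    Nat.card (CodeT n k) = ∑ t : ZMod n, Nat.card (FW n k t) :=
  card_eq_sum_fibers (fun x : CodeT n k => wsum n x.1)

theorem neck_card_of_not_dvd (hprime : n.Prime) (hndvd : ¬ n ∣ k) :
    Nat.card (necklaces n k) = Nat.card (FW n k 0) := by
  have h1 := card_code_eq_of_not_dvd (k := k) hprime hndvd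
  have h2 := card_code_eq_sum_fw (n := n) (k := k)
  rw [Finset.sum_congr rfl (fun t _ => card_fw_eq_of_not_dvd hprime hndvd t),
    Finset.sum_const, Finset.card_univ, ZMod.card, smul_eq_mul] at h2
  rw [h1] at h2
  exact Nat.eq_of_mul_eq_mul_left (Nat.pos_of_ne_zero (NeZero.ne n)) h2

end Counting

end NeckAux

namespace NeckAux

section ComplexPart

variable {n k : ℕ} [NeZero n]

noncomputable instance : Fintype (CodeT n k) := Fintype.ofFinite _

/-- The natural-number weighted sum. -/
def Wnat (x : CodeT n k) : ℕ := ∑ i : ZMod n, i.val * x.1 i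

lemma wsum_eq_cast (x : CodeT n k) : wsum n x.1 = ((Wnat x : ℕ) : ZMod n) := by
  unfold wsum Wnat
  push_cast
  exact Finset.sum_congr rfl fun i _ => by rw [ZMod.natCast_zmod_val]

lemma one_sub_mul_geom (a : ℂ) :
    (1 - PowerSeries.C a * PowerSeries.X) * PowerSeries.mk (fun d => a ^ d) = 1 := by
  ext d
  rw [sub_mul, one_mul, map_sub, mul_assoc]
  cases d with
  | zero => simp
  | succ m =>
      rw [PowerSeries.coeff_C_mul, PowerSeries.coeff_succ_X_mul, PowerSeries.coeff_mk,
        PowerSeries.coeff_mk, PowerSeries.coeff_one]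
      simp [pow_succ, mul_comm]

lemma prod_zmod_val {M : Type*} [CommMonoid M] (g : ℕ → M) :
    ∏ i : ZMod n, g i.val = ∏ j ∈ Finset.range n, g j := by
  apply Finset.prod_nbij (fun i => i.val)
  · intro a _; exact Finset.mem_range.mpr (ZMod.val_lt a)
  · intro a _ b _ h; exact ZMod.val_injective n h
  · intro j hj
    exact ⟨(j : ZMod n), Finset.mem_coe.mpr (Finset.mem_univ _),
      ZMod.val_cast_of_lt (Finset.mem_range.mp hj)⟩
  · intro a _; rfl

open Polynomial in
lemma prod_X_sub_pow (w : ℂ) (hw : IsPrimitiveRoot w n) :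
    ∏ j ∈ Finset.range n, (X - C (w ^ j)) = X ^ n - 1 := by
  have hmonic : (X ^ n - C (1:ℂ)).Monic := monic_X_pow_sub_C _ (NeZero.ne n)
  have hroots : (X ^ n - C (1:ℂ)).roots = (Multiset.range n).map (fun j => w ^ j * 1) := by
    have h1 : (X ^ n - C (1:ℂ)).roots = nthRoots n (1:ℂ) := rfl
    rw [h1, hw.nthRoots_eq (one_pow n)]
  have hcard : Multiset.card (X ^ n - C (1:ℂ)).roots = (X ^ n - C (1:ℂ)).natDegree := by
    rw [hroots, Multiset.card_map, Multiset.card_range, natDegree_X_pow_sub_C]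
  have hprod := prod_multiset_X_sub_C_of_monic_of_roots_card_eq hmonic hcard
  rw [hroots, Multiset.map_map] at hprod
  have h2 : ∏ j ∈ Finset.range n, (X - C (w ^ j))
      = ((Multiset.range n).map (fun j => X - C (w ^ j * 1))).prod := by
    rw [← Finset.range_val, ← Finset.prod_eq_multiset_prod]
    exact Finset.prod_congr rfl fun j _ => by rw [mul_one]
  rw [h2]
  rw [show ((fun a => X - C a) ∘ fun j => w ^ j * 1) = fun j => X - C (w ^ j * 1) from rfl] at hprod
  rw [hprod, map_one]

lemma prod_neg_pow_eq (hprime : n.Prime) (z : ℂ) (hz : IsPrimitiveRoot z n) :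
    ∏ i : ZMod n, (-(z ^ i.val)) = -1 := by
  rw [prod_zmod_val (fun v => -(z ^ v))]
  have h1 : ∏ j ∈ Finset.range n, (-(z ^ j)) = (-1 : ℂ) ^ n * z ^ (∑ j ∈ Finset.range n, j) := by
    have hh : ∀ j : ℕ, -(z ^ j) = (-1 : ℂ) * z ^ j := fun j => by ring
    rw [Finset.prod_congr rfl fun j _ => hh j, Finset.prod_mul_distrib, Finset.prod_const,
      Finset.card_range, Finset.prod_pow_eq_pow_sum]
  rw [h1, Finset.sum_range_id]
  rcases hprime.eq_two_or_odd' with h2 | hodd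
  · subst h2
    have hz2 : z = -1 := hz.eq_neg_one_of_two_right
    rw [hz2]
    norm_num
  · have hne : (-1 : ℂ) ^ n = -1 := hodd.neg_one_pow
    obtain ⟨e, he⟩ := Nat.Odd.sub_odd hodd odd_one
    have hd : n * (n - 1) / 2 = n * e := by
      rw [he]
      have h3 : n * (e + e) = 2 * (n * e) := by ring
      rw [h3, Nat.mul_div_cancel_left _ (by norm_num)]
    rw [hd, hne, pow_mul, hz.pow_eq_one, one_pow, mul_one]

open Polynomial in
lemma prod_one_sub_eq (hprime : n.Prime) (z : ℂ) (hz : IsPrimitiveRoot z n) :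
    ∏ i : ZMod n, ((1 : ℂ[X]) - C (z ^ i.val) * X) = 1 - X ^ n := by
  have hzne : z ≠ 0 := fun h0 => by
    have := hz.pow_eq_one
    rw [h0, zero_pow (NeZero.ne n)] at this
    exact zero_ne_one this
  have hfac : ∀ v : ℕ, (1 : ℂ[X]) - C (z ^ v) * X
      = (-C (z ^ v)) * (X - C ((z⁻¹) ^ v)) := by
    intro v
    have hmul : (z : ℂ) ^ v * (z⁻¹) ^ v = 1 := by
      rw [← mul_pow, mul_inv_cancel₀ hzne, one_pow]
    rw [neg_mul, mul_sub, ← C_mul, hmul, C_1, neg_sub]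
  calc ∏ i : ZMod n, ((1 : ℂ[X]) - C (z ^ i.val) * X)
      = ∏ i : ZMod n, ((-C (z ^ i.val)) * (X - C ((z⁻¹) ^ i.val))) :=
        Finset.prod_congr rfl fun i _ => hfac i.val
    _ = (∏ i : ZMod n, (-C (z ^ i.val))) * ∏ i : ZMod n, (X - C ((z⁻¹) ^ i.val)) :=
        Finset.prod_mul_distrib
    _ = C (∏ i : ZMod n, (-(z ^ i.val))) * ∏ j ∈ Finset.range n, (X - C ((z⁻¹) ^ j)) := by
        rw [prod_zmod_val (fun v => X - C ((z⁻¹) ^ v))]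
        congr 1
        rw [map_prod]
        exact Finset.prod_congr rfl fun i _ => by rw [map_neg]
    _ = C (-1 : ℂ) * (X ^ n - 1) := by
        rw [prod_neg_pow_eq hprime z hz, prod_X_sub_pow (z⁻¹) hz.inv]
    _ = 1 - X ^ n := by
        rw [map_neg, C_1]
        ring

/-- The geometric series `1/(1 - z^i X)`. -/
noncomputable def geomPS (n : ℕ) [NeZero n] (z : ℂ) (i : ZMod n) : PowerSeries ℂ :=
  PowerSeries.mk fun d => z ^ (i.val * d)

lemma key_prod_eq_one (hprime : n.Prime) (z : ℂ) (hz : IsPrimitiveRoot z n) :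
    (1 - PowerSeries.X ^ n) * ∏ i : ZMod n, geomPS n z i = 1 := by
  have h4 : ((1 : PowerSeries ℂ) - PowerSeries.X ^ n)
      = ∏ i : ZMod n, (1 - PowerSeries.C (z ^ i.val) * PowerSeries.X) := by
    have h3 := congrArg (Polynomial.coeToPowerSeries.ringHom (R := ℂ)) (prod_one_sub_eq hprime z hz)
    simp only [map_prod, map_sub, map_one, map_pow, map_mul,
      Polynomial.coeToPowerSeries.ringHom_apply, Polynomial.coe_X, Polynomial.coe_C] at h3
    rw [← h3]
    exact Finset.prod_congr rfl fun i _ => by rw [map_pow]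
  rw [h4, ← Finset.prod_mul_distrib]
  have h5 : ∀ i : ZMod n, (1 - PowerSeries.C (z ^ i.val) * PowerSeries.X) * geomPS n z i = 1 := by
    intro i
    have hgeq : geomPS n z i = PowerSeries.mk fun d => (z ^ i.val) ^ d := by
      unfold geomPS
      exact congrArg PowerSeries.mk (funext fun d => pow_mul z i.val d)
    rw [hgeq]
    exact one_sub_mul_geom (z ^ i.val)
  rw [Finset.prod_congr rfl fun i _ => h5 i, Finset.prod_const_one]

end ComplexPart

end NeckAux

namespace NeckAux

section ComplexPart2

variable {n k : ℕ} [NeZero n]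

lemma coeff_G (z : ℂ) :
    PowerSeries.coeff k (∏ i : ZMod n, geomPS n z i) = ∑ x : CodeT n k, z ^ Wnat x := by
  classical
  rw [PowerSeries.coeff_prod]
  have hterm : ∀ l : ZMod n →₀ ℕ,
      (∏ i : ZMod n, (PowerSeries.coeff (l i)) (geomPS n z i))
        = z ^ (∑ i : ZMod n, i.val * l i) := by
    intro l
    rw [← Finset.prod_pow_eq_pow_sum]
    exact Finset.prod_congr rfl fun i _ => by rw [geomPS, PowerSeries.coeff_mk]
  rw [Finset.sum_congr rfl fun l _ => hterm l]
  apply Finset.sum_bij (i := fun (l : ZMod n →₀ ℕ)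
    (hl : l ∈ Finset.finsuppAntidiag (Finset.univ : Finset (ZMod n)) k) =>
      (⟨(l : ZMod n → ℕ), (Finset.mem_finsuppAntidiag.mp hl).1⟩ : CodeT n k))
  · intro l hl; exact Finset.mem_univ _
  · intro l hl l' hl' h
    exact DFunLike.coe_injective (congrArg Subtype.val h)
  · intro x _
    refine ⟨Finsupp.equivFunOnFinite.symm x.1, ?_, ?_⟩
    · rw [Finset.mem_finsuppAntidiag]
      constructor
      · show ∑ i : ZMod n, (Finsupp.equivFunOnFinite.symm x.1) i = k
        have : ∀ i, (Finsupp.equivFunOnFinite.symm x.1) i = x.1 i := fun i => rfl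
        rw [Finset.sum_congr rfl fun i _ => this i]
        exact x.2
      · exact Finset.subset_univ _
    · apply Subtype.ext
      rfl
  · intro l hl
    rfl

lemma coeff_G_one (hprime : n.Prime) (z : ℂ) (hz : IsPrimitiveRoot z n) (m : ℕ) :
    PowerSeries.coeff (n * m) (∏ i : ZMod n, geomPS n z i) = 1 := by
  have hG : (∏ i : ZMod n, geomPS n z i : PowerSeries ℂ)
      = 1 + PowerSeries.X ^ n * ∏ i : ZMod n, geomPS n z i := by
    have h := key_prod_eq_one hprime z hz
    linear_combination h
  induction m with
  | zero =>
      rw [mul_zero, hG, map_add, PowerSeries.coeff_zero_eq_constantCoeff, map_one]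
      rw [show (PowerSeries.constantCoeff) (PowerSeries.X ^ n * ∏ i : ZMod n, geomPS n z i)
        = 0 from ?_, add_zero]
      rw [map_mul, map_pow, PowerSeries.constantCoeff_X,
        zero_pow (NeZero.ne n), zero_mul]
  | succ c ih =>
      have h2 : n * (c + 1) = n * c + n := by ring
      rw [hG, map_add, h2, PowerSeries.coeff_X_pow_mul, ih, PowerSeries.coeff_one,
        if_neg (by have := Nat.pos_of_ne_zero (NeZero.ne n); omega), zero_add]

lemma sum_z_pow_eq_one (hprime : n.Prime) (z : ℂ) (hz : IsPrimitiveRoot z n)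
    (hdvd : n ∣ k) : ∑ x : CodeT n k, z ^ Wnat x = 1 := by
  obtain ⟨m, rfl⟩ := hdvd
  rw [← coeff_G z, coeff_G_one hprime z hz m]

end ComplexPart2

end NeckAux

namespace NeckAux

section Orth

variable {n k : ℕ} [NeZero n]

lemma card_fw_zero_of_dvd (hprime : n.Prime) (hdvd : n ∣ k) :
    n * Nat.card (FW n k 0) = Nat.card (CodeT n k) + (n - 1) := by
  classical
  have hn0 : n ≠ 0 := NeZero.ne n
  have hnpos : 0 < n := Nat.pos_of_ne_zero hn0
  set ζ : ℂ := Complex.exp (2 * Real.pi * Complex.I / n) with hζdef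
  have hζ : IsPrimitiveRoot ζ n := Complex.isPrimitiveRoot_exp n hn0
  -- step A
  have hA : ∑ x : CodeT n k, (if n ∣ Wnat x then (n : ℂ) else 0)
      = (n : ℂ) * (Nat.card (FW n k 0) : ℂ) := by
    rw [Finset.sum_ite, Finset.sum_const_zero, add_zero, Finset.sum_const, nsmul_eq_mul]
    have hcardeq : (Finset.univ.filter (fun x : CodeT n k => n ∣ Wnat x)).card
        = Nat.card (FW n k 0) := by
      rw [← Fintype.card_subtype]
      have e : {x : CodeT n k // n ∣ Wnat x} ≃ FW n k 0 :=
        Equiv.subtypeEquivRight (fun x => by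
          rw [wsum_eq_cast x, ZMod.natCast_eq_zero_iff])
      rw [← Nat.card_eq_fintype_card, Nat.card_congr e]
    rw [hcardeq, mul_comm]
  -- step B
  have hB : ∀ x : CodeT n k, (if n ∣ Wnat x then (n : ℂ) else 0)
      = ∑ u ∈ Finset.range n, (ζ ^ u) ^ Wnat x := by
    intro x
    have hcomm : ∀ u : ℕ, (ζ ^ u) ^ Wnat x = (ζ ^ Wnat x) ^ u := by
      intro u
      rw [← pow_mul, ← pow_mul, mul_comm]
    rw [Finset.sum_congr rfl fun u _ => hcomm u]
    by_cases hw : n ∣ Wnat x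
    · rw [if_pos hw, (hζ.pow_eq_one_iff_dvd (Wnat x)).mpr hw]
      simp
    · rw [if_neg hw]
      have hne1 : ζ ^ Wnat x ≠ 1 := fun h1 => hw ((hζ.pow_eq_one_iff_dvd (Wnat x)).mp h1)
      rw [geom_sum_eq hne1]
      have hpow : (ζ ^ Wnat x) ^ n = 1 := by
        rw [← pow_mul, mul_comm, pow_mul, hζ.pow_eq_one, one_pow]
      rw [hpow, sub_self, zero_div]
  -- step C
  have hC : ∑ u ∈ Finset.range n, (∑ x : CodeT n k, (ζ ^ u) ^ Wnat x)
      = (Nat.card (CodeT n k) : ℂ) + ((n - 1 : ℕ) : ℂ) := by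
    rw [← Finset.add_sum_erase _ _ (Finset.mem_range.mpr hnpos)]
    congr 1
    · rw [pow_zero]
      simp [Nat.card_eq_fintype_card]
    · have hval : ∀ u ∈ (Finset.range n).erase 0,
          (∑ x : CodeT n k, (ζ ^ u) ^ Wnat x) = 1 := by
        intro u hu
        have hu0 : u ≠ 0 := Finset.ne_of_mem_erase hu
        have hult : u < n := Finset.mem_range.mp (Finset.mem_of_mem_erase hu)
        have hcop : u.Coprime n := by
          rw [Nat.coprime_comm]
          exact (Nat.Prime.coprime_iff_not_dvd hprime).mpr
            (fun hdvd' => by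
              have := Nat.le_of_dvd (Nat.pos_of_ne_zero hu0) hdvd'
              omega)
        exact sum_z_pow_eq_one hprime (ζ ^ u) (hζ.pow_of_coprime u hcop) hdvd
      rw [Finset.sum_congr rfl hval, Finset.sum_const,
        Finset.card_erase_of_mem (Finset.mem_range.mpr hnpos), Finset.card_range]
      simp
  -- combine
  have hmain : (n : ℂ) * (Nat.card (FW n k 0) : ℂ)
      = (Nat.card (CodeT n k) : ℂ) + ((n - 1 : ℕ) : ℂ) := by
    rw [← hA, ← hC, Finset.sum_congr rfl fun x _ => hB x, Finset.sum_comm]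
  exact_mod_cast hmain

theorem neck_card_of_dvd (hprime : n.Prime) (hdvd : n ∣ k) :
    Nat.card (necklaces n k) = Nat.card (FW n k 0) := by
  have h1 := card_code_eq_of_dvd (k := k) hprime hdvd
  have h2 := card_fw_zero_of_dvd (k := k) hprime hdvd
  have hnpos : 0 < n := Nat.pos_of_ne_zero (NeZero.ne n)
  haveI : Nonempty (necklaces n k) := ⟨toNeck (constCode n k hdvd)⟩
  have hN : 1 ≤ Nat.card (necklaces n k) :=
    Nat.card_pos (α := necklaces n k)
  have hmul : n * Nat.card (FW n k 0) = n * Nat.card (necklaces n k) := by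
    rw [h2, h1]
    obtain ⟨N', hN'⟩ : ∃ N', Nat.card (necklaces n k) = N' + 1 :=
      ⟨Nat.card (necklaces n k) - 1, by omega⟩
    rw [hN']
    have hx : n * (N' + 1 - 1) = n * N' := by norm_num
    have hy : n * (N' + 1) = n * N' + n := by ring
    rw [hx, hy]
    set B := n * N'
    omega
  exact (Nat.eq_of_mul_eq_mul_left hnpos hmul).symm

end Orth

end NeckAux

/-- If `n` is prime, there is a bijection between `N_{n,k}` and `F_{n,k,0}`,
the `(n,k)`-codes with weighted sum `0`. -/
theorem prime_necklace_bijection (n k : ℕ) [NeZero n] (hk : 0 < k)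
    (hprime : n.Prime) :
    Nonempty
      (necklaces n k ≃ {f : ZMod n → ℕ // IsCode n k f ∧ wsum n f = 0}) := by
  classical
  have hcard : Nat.card (necklaces n k) = Nat.card (NeckAux.FW n k 0) := by
    by_cases hdvd : n ∣ k
    · exact NeckAux.neck_card_of_dvd hprime hdvd
    · exact NeckAux.neck_card_of_not_dvd hprime hdvd
  letI : Fintype (necklaces n k) := Fintype.ofFinite _
  letI : Fintype (NeckAux.FW n k 0) := Fintype.ofFinite _
  have hcard2 : Fintype.card (necklaces n k) = Fintype.card (NeckAux.FW n k 0) := by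
    rw [← Nat.card_eq_fintype_card, ← Nat.card_eq_fintype_card]
    exact hcard
  obtain ⟨e⟩ := Fintype.card_eq.mp hcard2
  exact ⟨e.trans (Equiv.subtypeSubtypeEquivSubtypeInter (IsCode n k) (fun f => wsum n f = 0))⟩
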